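/- For every fair-goods instance with n agents, there exists a connected MMS allocation A such that v_i(A_i) >= max{ MMS_i, OPT_E/(2n) } for every agent i; in particular EW(A) >= OPT_E/(2n), so the price of MMS with respect to egalitarian welfare for goods is at most 2n. -/

import Mathlib

open Finset

noncomputable section

/-- The value of a bundle `S` of items under additive (item-level) valuation `v`. -/
def bundleVal {m : ℕ} (v : Fin m → ℝ) (S : Finset (Fin m)) : ℝ := ∑ e ∈ S, v e

/-- A bundle is connected if it is an interval of the line `e_1, …, e_m`. -/
def IsConnBundle {m : ℕ} (S : Finset (Fin m)) : Prop :=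
  ∀ a ∈ S, ∀ c ∈ S, ∀ b : Fin m, a ≤ b → b ≤ c → b ∈ S

/-- A connected allocation: pairwise disjoint connected bundles covering all items. -/
def ConnAlloc (n m : ℕ) (A : Fin n → Finset (Fin m)) : Prop :=
  (∀ i, IsConnBundle (A i)) ∧
  (∀ i j : Fin n, i ≠ j → Disjoint (A i) (A j)) ∧
  (∀ e : Fin m, ∃ i, e ∈ A i)

/-- The maximin share of an agent with valuation `v`: the maximum over connected
`n`-partitions of the minimum bundle value. -/
def mmsVal (n m : ℕ) (v : Fin m → ℝ) : ℝ :=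
  sSup { x : ℝ | ∃ A : Fin n → Finset (Fin m), ConnAlloc n m A ∧ x = ⨅ j, bundleVal v (A j) }

/-- Utilitarian welfare of an allocation. -/
def utilW (n m : ℕ) (v : Fin n → Fin m → ℝ) (A : Fin n → Finset (Fin m)) : ℝ :=
  ∑ i, bundleVal (v i) (A i)

/-- Egalitarian welfare of an allocation. -/
def egalW (n m : ℕ) (v : Fin n → Fin m → ℝ) (A : Fin n → Finset (Fin m)) : ℝ :=
  ⨅ i, bundleVal (v i) (A i)

/-- Optimal utilitarian welfare over all connected allocations. -/
def optU (n m : ℕ) (v : Fin n → Fin m → ℝ) : ℝ :=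
  sSup { x : ℝ | ∃ A, ConnAlloc n m A ∧ x = utilW n m v A }

/-- Optimal egalitarian welfare over all connected allocations. -/
def optE (n m : ℕ) (v : Fin n → Fin m → ℝ) : ℝ :=
  sSup { x : ℝ | ∃ A, ConnAlloc n m A ∧ x = egalW n m v A }

namespace PMMS

variable {n m : ℕ}

/-- The interval of items with indices in `[a, b)`. -/
def seg (m a b : ℕ) : Finset (Fin m) := Finset.univ.filter (fun e => a ≤ (e : ℕ) ∧ (e : ℕ) < b)

lemma mem_seg {a b : ℕ} {e : Fin m} : e ∈ seg m a b ↔ a ≤ (e : ℕ) ∧ (e : ℕ) < b := by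
  simp [seg]

lemma seg_conn (a b : ℕ) : IsConnBundle (seg m a b) := by
  intro x hx z hz y hxy hyz
  rw [mem_seg] at hx hz ⊢
  have h1 : (x : ℕ) ≤ (y : ℕ) := hxy
  have h2 : (y : ℕ) ≤ (z : ℕ) := hyz
  omega

lemma seg_subset {a b a' b' : ℕ} (ha : a' ≤ a) (hb : b ≤ b' ∨ b' = m) :
    seg m a b ⊆ seg m a' b' := by
  intro e he
  rw [mem_seg] at he ⊢
  have := e.isLt
  omega

lemma bundleVal_nonneg {v : Fin m → ℝ} (hv : ∀ e, 0 ≤ v e) (S : Finset (Fin m)) :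
    0 ≤ bundleVal v S := Finset.sum_nonneg fun e _ => hv e

lemma bundleVal_mono {v : Fin m → ℝ} (hv : ∀ e, 0 ≤ v e) {S T : Finset (Fin m)} (h : S ⊆ T) :
    bundleVal v S ≤ bundleVal v T :=
  Finset.sum_le_sum_of_subset_of_nonneg h fun e _ _ => hv e

lemma bundleVal_empty {v : Fin m → ℝ} : bundleVal v (∅ : Finset (Fin m)) = 0 := by
  simp [bundleVal]

lemma seg_split (v : Fin m → ℝ) {a b c : ℕ} (hab : a ≤ b) (hbc : b ≤ c) :
    bundleVal v (seg m a c) = bundleVal v (seg m a b) + bundleVal v (seg m b c) := by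
  have hdis : Disjoint (seg m a b) (seg m b c) := by
    rw [Finset.disjoint_left]
    intro e he he'
    rw [mem_seg] at he he'
    omega
  have hun : seg m a c = seg m a b ∪ seg m b c := by
    ext e
    simp only [mem_seg, Finset.mem_union]
    omega
  rw [hun, bundleVal, Finset.sum_union hdis]
  rfl

lemma inter_split (v : Fin m → ℝ) (O : Finset (Fin m)) {p q : ℕ} (hpq : p ≤ q) :
    bundleVal v (O ∩ seg m p m) =
      bundleVal v (O ∩ seg m p q) + bundleVal v (O ∩ seg m q m) := by
  have hdis : Disjoint (O ∩ seg m p q) (O ∩ seg m q m) := by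
    rw [Finset.disjoint_left]
    intro e he he'
    rw [Finset.mem_inter, mem_seg] at he he'
    omega
  have hun : O ∩ seg m p m = (O ∩ seg m p q) ∪ (O ∩ seg m q m) := by
    ext e
    simp only [Finset.mem_inter, mem_seg, Finset.mem_union]
    have := e.isLt
    constructor
    · rintro ⟨h1, h2, h3⟩
      by_cases h : (e : ℕ) < q
      · exact Or.inl ⟨h1, h2, h⟩
      · exact Or.inr ⟨h1, by omega, h3⟩
    · rintro (⟨h1, h2, h3⟩ | ⟨h1, h2, h3⟩) <;> exact ⟨h1, by omega, by omega⟩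
  rw [hun, bundleVal, Finset.sum_union hdis]
  rfl

lemma cuts_of_parts (v : Fin m → ℝ) (hv : ∀ e, 0 ≤ v e) (t : ℝ) :
    ∀ (k p : ℕ), p ≤ m → ∀ A : Fin k → Finset (Fin m),
    (∀ j, IsConnBundle (A j)) → (∀ i j, i ≠ j → Disjoint (A i) (A j)) →
    (∀ j, A j ⊆ seg m p m) → (∀ e : Fin m, p ≤ (e : ℕ) → ∃ j, e ∈ A j) →
    (∀ j, t ≤ bundleVal v (A j)) →
    ∃ c : ℕ → ℕ, c 0 = p ∧ c k = m ∧ (∀ l, l < k → c l ≤ c (l+1)) ∧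
      (∀ l, l ≤ k → c l ≤ m) ∧ (∀ l, l < k → t ≤ bundleVal v (seg m (c l) (c (l+1)))) := by
  intro k
  induction k with
  | zero =>
    intro p hpm A _ _ _ hcov _
    have hpm' : p = m := by
      by_contra h
      obtain ⟨j, _⟩ := hcov ⟨p, lt_of_le_of_ne hpm h⟩ le_rfl
      exact j.elim0
    exact ⟨fun _ => p, rfl, hpm', fun l hl => by omega, fun l _ => hpm, fun l hl => by omega⟩
  | succ k ih =>
    intro p hpm A hconn hdisj hsub hcov hval
    by_cases hp : m ≤ p
    · have hpm' : p = m := le_antisymm hpm hp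
      refine ⟨fun _ => p, rfl, hpm', fun l _ => le_rfl, fun l _ => hpm, fun l _ => ?_⟩
      have hseg : seg m p p = (∅ : Finset (Fin m)) := by
        ext e; simp only [mem_seg, Finset.notMem_empty, iff_false]; omega
      have hA0 : A 0 = ∅ := by
        have h1 := hsub 0
        rw [hpm'] at h1
        have : seg m m m = (∅ : Finset (Fin m)) := by
          ext e; have := e.isLt; simp only [mem_seg, Finset.notMem_empty, iff_false]; omega
        rw [this] at h1
        exact Finset.subset_empty.mp h1
      have := hval 0
      rw [hA0, bundleVal_empty] at this
      rw [hseg, bundleVal_empty]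
      exact this
    · push_neg at hp
      obtain ⟨j0, hj0⟩ := hcov ⟨p, hp⟩ le_rfl
      have hne : (A j0).Nonempty := ⟨_, hj0⟩
      set b := (A j0).max' hne with hbdef
      have hbmem : b ∈ A j0 := Finset.max'_mem _ _
      set q := (b : ℕ) + 1 with hqdef
      have hpb : p ≤ (b : ℕ) := Fin.le_def.mp (Finset.le_max' _ _ hj0)
      have hqm : q ≤ m := b.isLt
      have hpq : p ≤ q := by omega
      have hAj0 : A j0 = seg m p q := by
        ext e
        rw [mem_seg]
        constructor
        · intro he
          refine ⟨(mem_seg.mp (hsub j0 he)).1, ?_⟩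
          have := Fin.le_def.mp (Finset.le_max' _ _ he)
          omega
        · rintro ⟨h1, h2⟩
          exact hconn j0 ⟨p, hp⟩ hj0 b hbmem e (Fin.le_def.mpr h1) (Fin.le_def.mpr (by omega))
      set B : Fin k → Finset (Fin m) := fun l => A (j0.succAbove l) with hBdef
      have hBsub : ∀ l, B l ⊆ seg m q m := by
        intro l e he
        have h1 := mem_seg.mp (hsub _ he)
        rw [mem_seg]
        refine ⟨?_, h1.2⟩
        by_contra h
        push_neg at h
        have heA : e ∈ A j0 := by
          rw [hAj0, mem_seg]; exact ⟨h1.1, h⟩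
        exact (Finset.disjoint_left.mp (hdisj _ _ (Fin.succAbove_ne j0 l)) he) heA
      have hBcov : ∀ e : Fin m, q ≤ (e : ℕ) → ∃ l, e ∈ B l := by
        intro e he
        obtain ⟨j, hj⟩ := hcov e (by omega)
        have hjne : j ≠ j0 := by
          intro h
          subst h
          rw [hAj0, mem_seg] at hj
          omega
        obtain ⟨l, hl⟩ := Fin.exists_succAbove_eq hjne
        exact ⟨l, by rw [hBdef]; simp only; rw [hl]; exact hj⟩
      obtain ⟨c', hc0, hck, hmono, hle, hval'⟩ :=
        ih q hqm B (fun l => hconn _) (fun i j hij => hdisj _ _ (fun h => hij ((Fin.succAbove_right_injective) h)))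
          hBsub hBcov (fun l => hval _)
      refine ⟨fun l => Nat.casesOn l p c', rfl, hck, ?_, ?_, ?_⟩
      · intro l hl
        cases l with
        | zero => show p ≤ c' 0; rw [hc0]; exact hpq
        | succ l' => exact hmono l' (by omega)
      · intro l hl
        cases l with
        | zero => exact hpm
        | succ l' => exact hle l' (by omega)
      · intro l hl
        cases l with
        | zero =>
          show t ≤ bundleVal v (seg m p (c' 0))
          rw [hc0, ← hAj0]
          exact hval j0
        | succ l' => exact hval' l' (by omega)



lemma key_arith (hn : 1 ≤ n) {μ : ℝ} (hμ : 0 ≤ μ) {r : ℕ} (hr1 : 1 ≤ r) (hrn : r ≤ n) :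
    μ / (2 * (n : ℝ)) ≤ μ - ((n : ℝ) - r) * (μ / (2 * (n : ℝ))) := by
  have hn0 : (0 : ℝ) < (n : ℝ) := by exact_mod_cast hn
  have hx0 : 0 ≤ μ / (2 * (n : ℝ)) := by positivity
  have hnx : (n : ℝ) * (μ / (2 * (n : ℝ))) = μ / 2 := by
    field_simp
  have hr1' : (1 : ℝ) ≤ (r : ℝ) := by exact_mod_cast hr1
  have h1 : ((n : ℝ) - r) * (μ / (2 * (n : ℝ))) ≤ ((n : ℝ) - 1) * (μ / (2 * (n : ℝ))) :=
    mul_le_mul_of_nonneg_right (by linarith) hx0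
  nlinarith [hnx]

lemma engine (hn : 1 ≤ n) (v : Fin n → Fin m → ℝ) (hpos : ∀ i j, 0 ≤ v i j)
    (t : Fin n → ℝ) (ht : ∀ j, 0 ≤ t j) (μ : ℝ) (hμ : 0 ≤ μ)
    (O : Fin n → Finset (Fin m)) (hOc : ∀ j, IsConnBundle (O j))
    (hOd : ∀ i j, i ≠ j → Disjoint (O i) (O j)) :
    ∀ (k p : ℕ), p ≤ m → ∀ R : Finset (Fin n), R.card = k + 1 →
    (∀ j ∈ R, μ / (2 * (n : ℝ)) ≤ t j → ∃ c : ℕ → ℕ, c 0 = p ∧ c (k+1) = m ∧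
       (∀ l, l < k+1 → c l ≤ c (l+1)) ∧ (∀ l, l ≤ k+1 → c l ≤ m) ∧
       (∀ l, l < k+1 → t j ≤ bundleVal (v j) (seg m (c l) (c (l+1))))) →
    (∀ j ∈ R, t j < μ / (2 * (n : ℝ)) →
       μ - ((n : ℝ) - (k+1 : ℕ)) * (μ / (2 * (n : ℝ))) ≤ bundleVal (v j) (O j ∩ seg m p m)) →
    ∃ A : Fin n → Finset (Fin m),
      (∀ j, ∃ a b, A j = seg m a b) ∧ (∀ i j, i ≠ j → Disjoint (A i) (A j)) ∧
      (∀ j, A j ⊆ seg m p m) ∧ (∀ e : Fin m, p ≤ (e : ℕ) → ∃ j ∈ R, e ∈ A j) ∧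
      (∀ j, j ∉ R → A j = ∅) ∧
      (∀ j ∈ R, max (t j) (μ / (2 * (n : ℝ))) ≤ bundleVal (v j) (A j)) := by
  classical
  set x : ℝ := μ / (2 * (n : ℝ)) with hxdef
  have hn0 : (0 : ℝ) < (n : ℝ) := by exact_mod_cast hn
  have hx0 : 0 ≤ x := by positivity
  intro k
  induction k with
  | zero =>
    intro p hpm R hcard Hm Hp
    obtain ⟨j1, hj1⟩ := Finset.card_eq_one.mp hcard
    have hcardn : 1 ≤ n := hn
    refine ⟨fun j => if j = j1 then seg m p m else ∅, ?_, ?_, ?_, ?_, ?_, ?_⟩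
    · intro j
      by_cases h : j = j1
      · exact ⟨p, m, by beta_reduce; rw [if_pos h]⟩
      · refine ⟨1, 0, by beta_reduce; rw [if_neg h]; ext e; simp only [mem_seg, Finset.notMem_empty, false_iff]; omega⟩
    · intro i j hij
      by_cases hi : i = j1
      · have hj : j ≠ j1 := fun h => hij (hi.trans h.symm)
        simp [hi, hj]
      · simp [hi]
    · intro j
      by_cases h : j = j1 <;> simp [h]
    · intro e he
      exact ⟨j1, by rw [hj1]; exact Finset.mem_singleton_self j1,
        by beta_reduce; rw [if_pos rfl, mem_seg]; exact ⟨he, e.isLt⟩⟩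
    · intro j hj
      have : j ≠ j1 := by rw [hj1] at hj; simpa using hj
      beta_reduce; rw [if_neg this]
    · intro j hj
      have hjj1 : j = j1 := by rw [hj1] at hj; simpa using hj
      subst hjj1
      beta_reduce; rw [if_pos rfl]
      by_cases hrp : x ≤ t j
      · obtain ⟨c, hc0, hc1, _, hcle, hcval⟩ := Hm j hj hrp
        have h1 : t j ≤ bundleVal (v j) (seg m p m) := by
          have := hcval 0 (by omega)
          rw [hc0] at this
          calc t j ≤ bundleVal (v j) (seg m p (c 1)) := this
            _ ≤ bundleVal (v j) (seg m p m) :=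
              bundleVal_mono (hpos j) (seg_subset le_rfl (Or.inl (hcle 1 (by omega))))
        exact max_le h1 (hrp.trans h1)
      · push_neg at hrp
        have hRn : 1 ≤ n := hn
        have h2 := Hp j hj hrp
        have h3 : bundleVal (v j) (O j ∩ seg m p m) ≤ bundleVal (v j) (seg m p m) :=
          bundleVal_mono (hpos j) Finset.inter_subset_right
        have h4 : x ≤ μ - ((n : ℝ) - ((0:ℕ)+1 : ℕ)) * x :=
          key_arith hn hμ le_rfl hn
        have hfinal : x ≤ bundleVal (v j) (seg m p m) := h4.trans (h2.trans h3)
        exact max_le (hrp.le.trans hfinal) hfinal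
  | succ k ih =>
    intro p hpm R hcard Hm Hp
    have hcard_le : k + 2 ≤ n := by
      have h1 : R.card ≤ n := by simpa using Finset.card_le_univ R
      omega
    have hRne : R.Nonempty := Finset.card_pos.mp (by omega)
    set g : Fin n → ℝ := fun j => max (t j) x with hgdef
    -- the whole suffix satisfies every remaining agent's demand
    have hdem : ∀ j ∈ R, g j ≤ bundleVal (v j) (seg m p m) := by
      intro j hj
      by_cases hrp : x ≤ t j
      · obtain ⟨c, hc0, hc1, _, hcle, hcval⟩ := Hm j hj hrp
        have h1 : t j ≤ bundleVal (v j) (seg m p m) := by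
          have := hcval 0 (by omega)
          rw [hc0] at this
          calc t j ≤ bundleVal (v j) (seg m p (c 1)) := this
            _ ≤ bundleVal (v j) (seg m p m) :=
              bundleVal_mono (hpos j) (seg_subset le_rfl (Or.inl (hcle 1 (by omega))))
        exact max_le h1 (hrp.trans h1)
      · push_neg at hrp
        have h2 := Hp j hj hrp
        have h4 : x ≤ μ - ((n : ℝ) - ((k+1)+1 : ℕ)) * x :=
          key_arith hn hμ (by omega) (by exact_mod_cast hcard_le)
        have h3 : bundleVal (v j) (O j ∩ seg m p m) ≤ bundleVal (v j) (seg m p m) :=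
          bundleVal_mono (hpos j) Finset.inter_subset_right
        exact max_le (le_trans hrp.le (h4.trans (h2.trans h3))) (h4.trans (h2.trans h3))
    set q : Fin n → ℕ := fun j => sInf {q' | p ≤ q' ∧ g j ≤ bundleVal (v j) (seg m p q')}
      with hqdef
    have hqmem : ∀ j ∈ R, p ≤ q j ∧ g j ≤ bundleVal (v j) (seg m p (q j)) := by
      intro j hj
      have hmem : m ∈ {q' : ℕ | p ≤ q' ∧ g j ≤ bundleVal (v j) (seg m p q')} := ⟨hpm, hdem j hj⟩
      exact Nat.sInf_mem ⟨m, hmem⟩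
    have hqle : ∀ j ∈ R, q j ≤ m := by
      intro j hj
      have hmem : m ∈ {q' : ℕ | p ≤ q' ∧ g j ≤ bundleVal (v j) (seg m p q')} := ⟨hpm, hdem j hj⟩
      exact Nat.sInf_le hmem
    have hqminlt : ∀ j, ∀ b, b < q j → p ≤ b → ¬ g j ≤ bundleVal (v j) (seg m p b) := by
      intro j b hb hpb hgb
      have hmem : b ∈ {q' : ℕ | p ≤ q' ∧ g j ≤ bundleVal (v j) (seg m p q')} := ⟨hpb, hgb⟩
      exact Nat.notMem_of_lt_sInf hb hmem
    have hRim : (R.image q).Nonempty := hRne.image q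
    set qmin : ℕ := (R.image q).min' hRim with hqmindef
    obtain ⟨j₀, hj₀R, hj₀q⟩ := Finset.mem_image.mp ((R.image q).min'_mem hRim)
    have hqminle : ∀ j ∈ R, qmin ≤ q j := fun j hj =>
      Finset.min'_le _ _ (Finset.mem_image_of_mem q hj)
    -- choose the agent to serve
    obtain ⟨js, hjsR, hjsq, hspec⟩ :
        ∃ js, js ∈ R ∧ q js = qmin ∧
          (∀ j ∈ R, j ≠ js → t j < x → q j = qmin →
            ∀ w : Fin m, (w : ℕ) + 1 = qmin → w ∉ O j) := by
      by_cases hsp : ∃ j, j ∈ R ∧ t j < x ∧ q j = qmin ∧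
          ∃ w : Fin m, (w : ℕ) + 1 = qmin ∧ w ∈ O j
      · obtain ⟨js, hjs1, hjs2, hjs3, w0, hw01, hw02⟩ := hsp
        refine ⟨js, hjs1, hjs3, ?_⟩
        intro j hj hjne _ _ w hw hwO
        have hww : w = w0 := Fin.ext (by omega)
        subst hww
        exact (Finset.disjoint_left.mp (hOd j js hjne) hwO) hw02
      · refine ⟨j₀, hj₀R, hj₀q, ?_⟩
        intro j hj hjne hpoor hq w hw hwO
        exact hsp ⟨j, hj, hpoor, hq, w, hw, hwO⟩
    have hpq : p ≤ qmin := hjsq ▸ (hqmem js hjsR).1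
    have hqm : qmin ≤ m := hjsq ▸ hqle js hjsR
    -- recurse
    set R' : Finset (Fin n) := R.erase js with hR'def
    have hcard' : R'.card = k + 1 := by
      rw [hR'def, Finset.card_erase_of_mem hjsR, hcard]
      omega

    have Hm' : ∀ j ∈ R', x ≤ t j → ∃ c : ℕ → ℕ, c 0 = qmin ∧ c (k+1) = m ∧
        (∀ l, l < k+1 → c l ≤ c (l+1)) ∧ (∀ l, l ≤ k+1 → c l ≤ m) ∧
        (∀ l, l < k+1 → t j ≤ bundleVal (v j) (seg m (c l) (c (l+1)))) := by
      intro j hj hrich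
      have hjR : j ∈ R := Finset.mem_of_mem_erase hj
      obtain ⟨c, hc0, hck, hmono, hle, hval⟩ := Hm j hjR hrich
      have hgj : g j = t j := max_eq_left hrich
      have hqc1 : q j ≤ c 1 := by
        have hmem : c 1 ∈ {q' : ℕ | p ≤ q' ∧ g j ≤ bundleVal (v j) (seg m p q')} := by
          refine ⟨by rw [← hc0]; exact hmono 0 (by omega), ?_⟩
          rw [hgj]
          have := hval 0 (by omega)
          rwa [hc0] at this
        exact Nat.sInf_le hmem
      have h1 : qmin ≤ c 1 := (hqminle j hjR).trans hqc1
      refine ⟨fun l => Nat.casesOn l qmin (fun l' => c (l' + 2)), rfl, hck, ?_, ?_, ?_⟩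
      · intro l hl
        cases l with
        | zero =>
          show qmin ≤ c 2
          exact h1.trans (hmono 1 (by omega))
        | succ l' => exact hmono (l' + 2) (by omega)
      · intro l hl
        cases l with
        | zero => exact hqm
        | succ l' => exact hle (l' + 2) (by omega)
      · intro l hl
        cases l with
        | zero =>
          show t j ≤ bundleVal (v j) (seg m qmin (c 2))
          have hsplit := seg_split (m := m) (v j) h1 (hmono 1 (by omega))
          have hnn := bundleVal_nonneg (m := m) (hpos j) (seg m qmin (c 1))
          have := hval 1 (by omega)
          rw [hsplit]
          linarith
        | succ l' => exact hval (l' + 2) (by omega)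
    have Hp' : ∀ j ∈ R', t j < x → μ - ((n : ℝ) - (k+1 : ℕ)) * x ≤
        bundleVal (v j) (O j ∩ seg m qmin m) := by
      intro j hj hpoor
      have hjR : j ∈ R := Finset.mem_of_mem_erase hj
      have hjne : j ≠ js := Finset.ne_of_mem_erase hj
      have hold := Hp j hjR hpoor
      have hsplit := inter_split (m := m) (v j) (O j) hpq
      have hgj : g j = x := max_eq_right hpoor.le
      have hloss : bundleVal (v j) (O j ∩ seg m p qmin) ≤ x := by
        rcases lt_or_eq_of_le (hqminle j hjR) with hlt | heq
        · have h1 : bundleVal (v j) (O j ∩ seg m p qmin) ≤ bundleVal (v j) (seg m p qmin) :=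
            bundleVal_mono (hpos j) Finset.inter_subset_right
          have h2 : ¬ g j ≤ bundleVal (v j) (seg m p qmin) := hqminlt j qmin hlt hpq
          push_neg at h2
          rw [hgj] at h2
          linarith
        · -- q j = qmin: show the loss is zero
          have hempty : O j ∩ seg m p qmin = ∅ := by
            by_contra hne
            obtain ⟨x₀, hx₀⟩ := Finset.nonempty_iff_ne_empty.mpr hne
            rw [Finset.mem_inter, mem_seg] at hx₀
            obtain ⟨hx₀O, hx₀p, hx₀q⟩ := hx₀
            have hq1 : 1 ≤ qmin := by omega
            set T : Finset (Fin m) := O j ∩ seg m p m with hTdef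
            have hTne : T.Nonempty := ⟨x₀, Finset.mem_inter.mpr ⟨hx₀O, mem_seg.mpr ⟨hx₀p, x₀.isLt⟩⟩⟩
            set b : Fin m := T.max' hTne with hbdef
            have hbT : b ∈ T := Finset.max'_mem _ _
            have hbO : b ∈ O j := (Finset.mem_inter.mp hbT).1
            have hbp : p ≤ (b : ℕ) := (mem_seg.mp (Finset.mem_inter.mp hbT).2).1
            have hkey : x ≤ μ - ((n : ℝ) - ((k+1)+1 : ℕ)) * x :=
              key_arith hn hμ (by omega) (by exact_mod_cast hcard_le)
            have hsub : T ⊆ seg m p ((b : ℕ) + 1) := by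
              intro e he
              rw [mem_seg]
              have h1 := (mem_seg.mp (Finset.mem_inter.mp he).2).1
              have h2 : (e : ℕ) ≤ (b : ℕ) := Fin.le_def.mp (Finset.le_max' _ _ he)
              omega
            have hqjb : q j ≤ (b : ℕ) + 1 := by
              have hmem : (b : ℕ) + 1 ∈
                  {q' : ℕ | p ≤ q' ∧ g j ≤ bundleVal (v j) (seg m p q')} := by
                refine ⟨by omega, ?_⟩
                rw [hgj]
                calc x ≤ μ - ((n : ℝ) - ((k+1)+1 : ℕ)) * x := hkey
                  _ ≤ bundleVal (v j) T := hold
                  _ ≤ bundleVal (v j) (seg m p ((b : ℕ) + 1)) := bundleVal_mono (hpos j) hsub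
              exact Nat.sInf_le hmem
            have hbqm : qmin ≤ (b : ℕ) + 1 := heq ▸ hqjb
            have hwit : ∃ w : Fin m, (w : ℕ) = qmin - 1 ∧ w ∈ O j := by
              by_cases hbcase : (b : ℕ) = qmin - 1
              · exact ⟨b, hbcase, hbO⟩
              · have hbge : qmin ≤ (b : ℕ) := by omega
                have hwlt : qmin - 1 < m := by omega
                refine ⟨⟨qmin - 1, hwlt⟩, rfl, ?_⟩
                exact hOc j x₀ hx₀O b hbO ⟨qmin - 1, hwlt⟩
                  (Fin.le_def.mpr (by simp; omega)) (Fin.le_def.mpr (by simp; omega))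
            obtain ⟨w, hw1, hw2⟩ := hwit
            exact hspec j hjR hjne hpoor heq.symm w (by omega) hw2
          rw [hempty, bundleVal_empty]
          exact hx0
      have hcast : ((n : ℝ) - (k+1 : ℕ)) = ((n : ℝ) - ((k+1)+1 : ℕ)) + 1 := by
        push_cast; ring
      rw [hcast]
      rw [hsplit] at hold
      linarith
    obtain ⟨A', hconn', hdisj', hsub', hcov', hnot', hval'⟩ := ih qmin hqm R' hcard' Hm' Hp'
    refine ⟨fun j => if j = js then seg m p qmin else A' j, ?_, ?_, ?_, ?_, ?_, ?_⟩
    · intro j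
      by_cases h : j = js
      · exact ⟨p, qmin, by beta_reduce; rw [if_pos h]⟩
      · obtain ⟨a, b, hab⟩ := hconn' j
        exact ⟨a, b, by beta_reduce; rw [if_neg h]; exact hab⟩
    · intro i j hij
      beta_reduce
      by_cases hi : i = js <;> by_cases hj : j = js
      · exact absurd (hi.trans hj.symm) hij
      · rw [if_pos hi, if_neg hj]
        rw [Finset.disjoint_left]
        intro e he heA
        have h1 := mem_seg.mp he
        have h2 := mem_seg.mp (hsub' j heA)
        omega
      · rw [if_neg hi, if_pos hj]
        rw [Finset.disjoint_left]
        intro e he heA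
        have h1 := mem_seg.mp (hsub' i he)
        have h2 := mem_seg.mp heA
        omega
      · rw [if_neg hi, if_neg hj]
        exact hdisj' i j hij
    · intro j
      beta_reduce
      by_cases h : j = js
      · rw [if_pos h]
        exact seg_subset le_rfl (Or.inr rfl)
      · rw [if_neg h]
        exact (hsub' j).trans (seg_subset hpq (Or.inr rfl))
    · intro e he
      by_cases h : (e : ℕ) < qmin
      · exact ⟨js, hjsR, by beta_reduce; rw [if_pos rfl, mem_seg]; exact ⟨he, h⟩⟩
      · obtain ⟨j, hj, hjA⟩ := hcov' e (by omega)
        refine ⟨j, Finset.mem_of_mem_erase hj, ?_⟩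
        beta_reduce
        rw [if_neg (Finset.ne_of_mem_erase hj)]
        exact hjA
    · intro j hj
      have h1 : j ≠ js := fun h => hj (h ▸ hjsR)
      beta_reduce
      rw [if_neg h1]
      exact hnot' j (fun h => hj (Finset.mem_of_mem_erase h))
    · intro j hj
      beta_reduce
      by_cases h : j = js
      · subst h
        rw [if_pos rfl]
        have := (hqmem j hjsR).2
        rwa [hjsq] at this
      · rw [if_neg h]
        exact hval' j (Finset.mem_erase.mpr ⟨h, hj⟩)



lemma exists_trivAlloc (hn : 1 ≤ n) : ∃ A : Fin n → Finset (Fin m), ConnAlloc n m A := by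
  refine ⟨fun i => if i = ⟨0, hn⟩ then Finset.univ else ∅, ?_, ?_, ?_⟩
  · intro i
    by_cases h : i = ⟨0, hn⟩ <;> simp only [h, if_pos, if_neg, ite_true, ite_false]
    · intro a _ c _ b _ _; exact Finset.mem_univ b
    · intro a ha; simp at ha
  · intro i j hij
    by_cases hi : i = ⟨0, hn⟩
    · have : j ≠ ⟨0, hn⟩ := fun h => hij (hi.trans h.symm)
      simp [hi, this]
    · simp [hi]
  · intro e; exact ⟨⟨0, hn⟩, by simp⟩

lemma attain (hn : 1 ≤ n) (f : (Fin n → Finset (Fin m)) → ℝ) :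
    ∃ A, ConnAlloc n m A ∧ sSup {x : ℝ | ∃ B, ConnAlloc n m B ∧ x = f B} = f A := by
  obtain ⟨A₀, hA₀⟩ := exists_trivAlloc (m := m) hn
  have hne : Set.Nonempty {x : ℝ | ∃ B, ConnAlloc n m B ∧ x = f B} := ⟨f A₀, A₀, hA₀, rfl⟩
  have hfin : Set.Finite {x : ℝ | ∃ B, ConnAlloc n m B ∧ x = f B} :=
    (Set.finite_range f).subset (by rintro x ⟨B, _, rfl⟩; exact ⟨B, rfl⟩)
  obtain ⟨A, hA, hx⟩ := hne.csSup_mem hfin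
  exact ⟨A, hA, hx⟩


end PMMS

/-- For every fair-goods instance there is a connected MMS allocation in
which every agent's value is at least `max (MMS_i) (OPT_E / (2n))`; in particular its
egalitarian welfare is at least `OPT_E / (2n)`. -/
theorem goods_egalitarian_mms_exists (n m : ℕ) (hn : 1 ≤ n)
    (v : Fin n → Fin m → ℝ)
    (hpos : ∀ i j, 0 ≤ v i j)
    (hnorm : ∀ i, bundleVal (v i) Finset.univ = 1) :
    ∃ A : Fin n → Finset (Fin m), ConnAlloc n m A ∧
      ∀ i, max (mmsVal n m (v i)) (optE n m v / (2 * n)) ≤ bundleVal (v i) (A i) := by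
  classical
  haveI : Nonempty (Fin n) := ⟨⟨0, hn⟩⟩
  obtain ⟨O, hOalloc, hOval⟩ := PMMS.attain (m := m) hn (egalW n m v)
  have hOeq : optE n m v = egalW n m v O := hOval
  have hOge : ∀ j, optE n m v ≤ bundleVal (v j) (O j) := by
    intro j
    rw [hOeq, egalW]
    exact ciInf_le (Set.finite_range _).bddBelow j
  have hmu0 : 0 ≤ optE n m v := by
    rw [hOeq, egalW]
    exact le_ciInf fun i => PMMS.bundleVal_nonneg (hpos i) _
  have hmms : ∀ j : Fin n, ∃ Aj, ConnAlloc n m Aj ∧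
      mmsVal n m (v j) = ⨅ l, bundleVal (v j) (Aj l) := by
    intro j
    exact PMMS.attain (m := m) hn (fun A => ⨅ l, bundleVal (v j) (A l))
  choose AM hAM1 hAM2 using hmms
  have ht0 : ∀ j, 0 ≤ mmsVal n m (v j) := by
    intro j
    rw [hAM2 j]
    exact le_ciInf fun l => PMMS.bundleVal_nonneg (hpos j) _
  have htle : ∀ j l, mmsVal n m (v j) ≤ bundleVal (v j) (AM j l) := by
    intro j l
    rw [hAM2 j]
    exact ciInf_le (Set.finite_range _).bddBelow l
  have hk : n - 1 + 1 = n := Nat.succ_pred_eq_of_pos hn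
  have hsegsub : ∀ (S : Finset (Fin m)), S ⊆ PMMS.seg m 0 m := by
    intro S e _
    exact PMMS.mem_seg.mpr ⟨Nat.zero_le _, e.isLt⟩
  have Hm : ∀ j ∈ (Finset.univ : Finset (Fin n)),
      optE n m v / (2 * (n : ℝ)) ≤ mmsVal n m (v j) → ∃ c : ℕ → ℕ, c 0 = 0 ∧
        c ((n-1)+1) = m ∧ (∀ l, l < (n-1)+1 → c l ≤ c (l+1)) ∧
        (∀ l, l ≤ (n-1)+1 → c l ≤ m) ∧
        (∀ l, l < (n-1)+1 → mmsVal n m (v j) ≤ bundleVal (v j) (PMMS.seg m (c l) (c (l+1)))) := by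
    intro j _ _
    rw [hk]
    exact PMMS.cuts_of_parts (v j) (hpos j) (mmsVal n m (v j)) n 0 (Nat.zero_le m) (AM j)
      (hAM1 j).1 (hAM1 j).2.1 (fun l => hsegsub _) (fun e _ => (hAM1 j).2.2 e) (htle j)
  have Hp : ∀ j ∈ (Finset.univ : Finset (Fin n)),
      mmsVal n m (v j) < optE n m v / (2 * (n : ℝ)) →
      optE n m v - ((n : ℝ) - ((n-1)+1 : ℕ)) * (optE n m v / (2 * (n : ℝ))) ≤
        bundleVal (v j) (O j ∩ PMMS.seg m 0 m) := by
    intro j _ _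
    have h1 : O j ∩ PMMS.seg m 0 m = O j := Finset.inter_eq_left.mpr (hsegsub _)
    rw [h1, hk]
    simpa using hOge j
  obtain ⟨A, hAconn, hAdisj, _, hAcov, _, hAval⟩ :=
    PMMS.engine hn v hpos (fun j => mmsVal n m (v j)) ht0 (optE n m v) hmu0 O
      hOalloc.1 hOalloc.2.1 (n-1) 0 (Nat.zero_le m) Finset.univ
      (by rw [Finset.card_univ, Fintype.card_fin]; omega) Hm Hp
  refine ⟨A, ⟨?_, hAdisj, ?_⟩, ?_⟩
  · intro i
    obtain ⟨a, b, hab⟩ := hAconn i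
    rw [hab]
    exact PMMS.seg_conn a b
  · intro e
    obtain ⟨j, _, hj⟩ := hAcov e (Nat.zero_le _)
    exact ⟨j, hj⟩
  · intro i
    exact hAval i (Finset.mem_univ i)
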